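/- Let d ≥ 1, T ∈ (0, ∞], let v : [0, T) × ℝ^d → ℝ^d be a continuously differentiable vector field which is divergence-free in space (trace of D_x v(t, x) equals 0 for all (t, x)), and suppose its flow Φ : [0, T) × ℝ^d → ℝ^d (Φ(0, x) = x, ∂_t Φ(t, x) = v(t, Φ(t, x))) exists, is continuously differentiable, and Φ(t, ·) is a bijection of ℝ^d for each t. If φ : [0, T) × ℝ^d → ℝ is continuously differentiable and satisfies ∂_t φ + v · ∇_x φ = 0, then t ↦ φ(t, ·) is a flow of rearrangements: for every t ∈ [0, T), the function φ(t, ·) is a rearrangement of φ(0, ·) with respect to Lebesgue measure on ℝ^d. -/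

import Mathlib

open MeasureTheory
open scoped ENNReal

open MeasureTheory Set

namespace TransportAux

variable {d : ℕ}

lemma hasDerivWithinAt_pi' {ι : Type*} [Fintype ι] {F : ι → Type*}
    [∀ i, NormedAddCommGroup (F i)] [∀ i, NormedSpace ℝ (F i)]
    {f : ℝ → ∀ i, F i} {f' : ∀ i, F i} {s : Set ℝ} {x : ℝ}
    (h : ∀ i, HasDerivWithinAt (fun t => f t i) (f' i) s x) :
    HasDerivWithinAt f f' s x := by
  rw [hasDerivWithinAt_iff_hasFDerivWithinAt]
  apply hasFDerivWithinAt_pi''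
  intro i
  have h2 := (h i).hasFDerivWithinAt
  have h3 : (ContinuousLinearMap.proj (R := ℝ) (φ := F) i).comp
      (ContinuousLinearMap.toSpanSingleton ℝ f') = ContinuousLinearMap.toSpanSingleton ℝ (f' i) := by
    ext; simp
  rw [h3]
  exact h2

noncomputable def detCMM (d : ℕ) :
    ContinuousMultilinearMap ℝ (fun _ : Fin d => (Fin d → ℝ)) ℝ :=
  MultilinearMap.mkContinuous
    (Matrix.detRowAlternating : ((Fin d → ℝ) [⋀^Fin d]→ₗ[ℝ] ℝ)).toMultilinearMap
    (d.factorial) (by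
      intro m
      have h1 : (Matrix.detRowAlternating (R := ℝ) (n := Fin d)).toMultilinearMap m
          = Matrix.det (Matrix.of m) := rfl
      rw [h1, Matrix.det_apply]
      refine (Finset.abs_sum_le_sum_abs _ _).trans ?_
      have hterm : ∀ σ : Equiv.Perm (Fin d),
          |Equiv.Perm.sign σ • ∏ i, Matrix.of m (σ i) i| ≤ ∏ i, ‖m i‖ := by
        intro σ
        have h2 : |Equiv.Perm.sign σ • ∏ i, Matrix.of m (σ i) i|
            = |∏ i, Matrix.of m (σ i) i| := by
          rcases Int.units_eq_one_or (Equiv.Perm.sign σ) with h | h <;> simp [h]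
        rw [h2, Finset.abs_prod]
        have h3 : ∀ i ∈ Finset.univ, |Matrix.of m (σ i) i| ≤ ‖m (σ i)‖ := by
          intro i _
          exact norm_le_pi_norm (m (σ i)) i
        calc ∏ i, |Matrix.of m (σ i) i| ≤ ∏ i, ‖m (σ i)‖ :=
              Finset.prod_le_prod (fun i _ => abs_nonneg _) h3
          _ = ∏ i, ‖m i‖ := Equiv.prod_comp σ (fun i => ‖m i‖)
      calc ∑ σ : Equiv.Perm (Fin d), |Equiv.Perm.sign σ • ∏ i, Matrix.of m (σ i) i|
          ≤ ∑ _σ : Equiv.Perm (Fin d), ∏ i, ‖m i‖ :=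
            Finset.sum_le_sum (fun σ _ => hterm σ)
        _ = (d.factorial : ℝ) * ∏ i, ‖m i‖ := by
            rw [Finset.sum_const, Finset.card_univ, Fintype.card_perm, Fintype.card_fin,
              nsmul_eq_mul])

lemma detCMM_apply (m : Fin d → Fin d → ℝ) : detCMM d m = Matrix.det (Matrix.of m) := rfl


lemma hasDerivWithinAt_det_comp {M : ℝ → Fin d → Fin d → ℝ}
    {N : Matrix (Fin d) (Fin d) ℝ} {s : Set ℝ} {s₀ : ℝ}
    (hM : HasDerivWithinAt M (fun i j => (N * Matrix.of (M s₀)) i j) s s₀)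
    (hN : Matrix.trace N = 0) :
    HasDerivWithinAt (fun u => Matrix.det (Matrix.of (M u))) 0 s s₀ := by
  classical
  set M₀ : Matrix (Fin d) (Fin d) ℝ := Matrix.of (M s₀) with hM₀
  have h1 : HasFDerivAt (detCMM d) ((detCMM d).linearDeriv (M s₀)) (M s₀) :=
    (detCMM d).hasFDerivAt (M s₀)
  have h2 := h1.comp_hasDerivWithinAt s₀ hM
  have hval : (detCMM d).linearDeriv (M s₀) (fun i j => (N * M₀) i j) = 0 := by
    rw [ContinuousMultilinearMap.linearDeriv_apply]
    have hterm : ∀ i : Fin d,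
        detCMM d (Function.update (M s₀) i ((N * M₀) i)) = N i i * M₀.det := by
      intro i
      have hupd : ∀ w : Fin d → ℝ, Function.update (M s₀) i w = M₀.updateRow i w := by
        intro w; rfl
      let L : (Fin d → ℝ) →ₗ[ℝ] ℝ :=
        { toFun := fun w => (M₀.updateRow i w).det
          map_add' := fun u v => Matrix.det_updateRow_add M₀ i u v
          map_smul' := fun c u => Matrix.det_updateRow_smul M₀ i c u }
      have hrow : (N * M₀) i = ∑ k, N i k • M₀ k := by
        funext j
        simp [Matrix.mul_apply, Finset.sum_apply]
      have hLr : detCMM d (Function.update (M s₀) i ((N * M₀) i)) = L ((N * M₀) i) := rfl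
      rw [hLr, hrow, map_sum]
      have hK : ∀ k : Fin d, L (N i k • M₀ k) = if k = i then N i i * M₀.det else 0 := by
        intro k
        rw [_root_.map_smul]
        by_cases hk : k = i
        · subst hk
          simp only [if_pos rfl]
          have : L (M₀ k) = M₀.det := by
            show (M₀.updateRow k (M₀ k)).det = M₀.det
            rw [Matrix.updateRow_eq_self]
          rw [this]; simp
        · simp only [if_neg hk]
          have : L (M₀ k) = 0 := by
            show (M₀.updateRow i (M₀ k)).det = 0
            apply Matrix.det_zero_of_row_eq (i_ne_j := Ne.symm hk)
            rw [Matrix.updateRow_self, Matrix.updateRow_ne hk]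
          rw [this]; simp
      rw [Finset.sum_congr rfl (fun k _ => hK k)]
      simp
    rw [Finset.sum_congr rfl (fun i _ => hterm i), ← Finset.sum_mul]
    have : ∑ i, N i i = Matrix.trace N := rfl
    rw [this, hN, zero_mul]
  have h3 : HasDerivWithinAt (fun u => detCMM d (M u)) 0 s s₀ := by
    rw [← hval]; exact h2
  convert h3 using 1
  exact funext fun u => (detCMM_apply (M u)).symm


lemma slice_hasFDerivAt {E G : Type*} [NormedAddCommGroup E] [NormedSpace ℝ E]
    [NormedAddCommGroup G] [NormedSpace ℝ G]
    {f : ℝ → E → G} {S : Set (ℝ × E)} {s : ℝ} {x : E}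
    (hf : DifferentiableWithinAt ℝ (fun p : ℝ × E => f p.1 p.2) S (s, x))
    (hmem : ∀ y : E, (s, y) ∈ S) :
    HasFDerivAt (f s)
      ((fderivWithin ℝ (fun p : ℝ × E => f p.1 p.2) S (s, x)).comp
        ((0 : E →L[ℝ] ℝ).prod (ContinuousLinearMap.id ℝ E))) x := by
  have hdw := hf.hasFDerivWithinAt
  have hcurve : HasFDerivAt (fun y : E => ((s, y) : ℝ × E))
      ((0 : E →L[ℝ] ℝ).prod (ContinuousLinearMap.id ℝ E)) x :=
    HasFDerivAt.prodMk (hasFDerivAt_const s x) (hasFDerivAt_id x)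
  have h2 := HasFDerivWithinAt.comp (s := (univ : Set E)) (t := S) x hdw
    (hcurve.hasFDerivWithinAt (s := (univ : Set E)))
    (fun y _ => hmem y)
  rw [hasFDerivWithinAt_univ] at h2
  exact h2

end TransportAux

open scoped ENNReal Topology
open TransportAux

/-- A `C¹` solution of the transport equation `∂ₜφ + v ⋅ ∇ₓφ = 0` on `[0, T) × ℝ^d`,
where `v` is a `C¹` divergence-free vector field whose flow exists, is `C¹` and is a
bijection at every time, is a flow of rearrangements: for every time `t ∈ [0, T)` and
every level `η > 0`, the superlevel sets `{φ(t,⋅) ≥ η}` and `{-φ(t,⋅) ≥ η}` have the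
same Lebesgue measure as those of the initial datum `φ(0,⋅)`. -/
theorem transport_divFree_isFlowOfRearrangements
    (d : ℕ) (hd : 1 ≤ d) (T : ℝ≥0∞) (hT : 0 < T)
    (v : ℝ → EuclideanSpace ℝ (Fin d) → EuclideanSpace ℝ (Fin d))
    (hv : ContDiffOn ℝ 1 (fun p : ℝ × EuclideanSpace ℝ (Fin d) => v p.1 p.2)
      {p : ℝ × EuclideanSpace ℝ (Fin d) | 0 ≤ p.1 ∧ ENNReal.ofReal p.1 < T})
    (hdiv : ∀ (t : ℝ) (x : EuclideanSpace ℝ (Fin d)), 0 ≤ t → ENNReal.ofReal t < T →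
      LinearMap.trace ℝ (EuclideanSpace ℝ (Fin d))
        (fderiv ℝ (v t) x : EuclideanSpace ℝ (Fin d) →ₗ[ℝ] EuclideanSpace ℝ (Fin d)) = 0)
    (Φ : ℝ → EuclideanSpace ℝ (Fin d) → EuclideanSpace ℝ (Fin d))
    (hΦreg : ContDiffOn ℝ 1 (fun p : ℝ × EuclideanSpace ℝ (Fin d) => Φ p.1 p.2)
      {p : ℝ × EuclideanSpace ℝ (Fin d) | 0 ≤ p.1 ∧ ENNReal.ofReal p.1 < T})
    (hΦ0 : ∀ x, Φ 0 x = x)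
    (hΦode : ∀ (t : ℝ) (x : EuclideanSpace ℝ (Fin d)), 0 ≤ t → ENNReal.ofReal t < T →
      HasDerivWithinAt (fun s => Φ s x) (v t (Φ t x))
        {s : ℝ | 0 ≤ s ∧ ENNReal.ofReal s < T} t)
    (hΦbij : ∀ t : ℝ, 0 ≤ t → ENNReal.ofReal t < T → Function.Bijective (Φ t))
    (φ : ℝ → EuclideanSpace ℝ (Fin d) → ℝ)
    (hφ : ContDiffOn ℝ 1 (fun p : ℝ × EuclideanSpace ℝ (Fin d) => φ p.1 p.2)
      {p : ℝ × EuclideanSpace ℝ (Fin d) | 0 ≤ p.1 ∧ ENNReal.ofReal p.1 < T})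
    (hpde : ∀ (t : ℝ) (x : EuclideanSpace ℝ (Fin d)), 0 ≤ t → ENNReal.ofReal t < T →
      HasDerivWithinAt (fun s => φ s x)
        (-(inner ℝ (v t x) (gradient (φ t) x) : ℝ))
        {s : ℝ | 0 ≤ s ∧ ENNReal.ofReal s < T} t) :
    ∀ t : ℝ, 0 ≤ t → ENNReal.ofReal t < T → ∀ η : ℝ, 0 < η →
      volume {x | η ≤ φ t x} = volume {x | η ≤ φ 0 x} ∧
      volume {x | η ≤ -(φ t x)} = volume {x | η ≤ -(φ 0 x)} := by
  classical
  set I : Set ℝ := {s : ℝ | 0 ≤ s ∧ ENNReal.ofReal s < T} with hIdef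
  set S : Set (ℝ × EuclideanSpace ℝ (Fin d)) :=
    {p : ℝ × EuclideanSpace ℝ (Fin d) | 0 ≤ p.1 ∧ ENNReal.ofReal p.1 < T} with hSdef
  have hmemI : ∀ s : ℝ, s ∈ I ↔ (0 ≤ s ∧ ENNReal.ofReal s < T) := fun s => Iff.rfl
  have hmemS : ∀ (s : ℝ) (x : EuclideanSpace ℝ (Fin d)), s ∈ I → ((s, x)) ∈ S :=
    fun s x hs => hs
  have hIcc : ∀ t ∈ I, Icc (0:ℝ) t ⊆ I := by
    intro t ht u hu
    exact ⟨hu.1, lt_of_le_of_lt (ENNReal.ofReal_le_ofReal hu.2) ht.2⟩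
  have hI0 : (0:ℝ) ∈ I := ⟨le_rfl, by simpa using hT⟩
  have huI : UniqueDiffOn ℝ I := by
    rcases eq_or_ne T ⊤ with hTtop | hTtop
    · have : I = Ici (0:ℝ) := by
        ext s; simp [hmemI, hTtop, ENNReal.ofReal_lt_top, mem_Ici]
      rw [this]; exact uniqueDiffOn_Ici 0
    · have : I = Ico (0:ℝ) T.toReal := by
        ext s
        simp only [hmemI, mem_Ico]
        exact and_congr_right fun hs => ENNReal.ofReal_lt_iff_lt_toReal hs hTtop
      rw [this]; exact uniqueDiffOn_Ico 0 T.toReal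
  have hprod : S = I ×ˢ (univ : Set (EuclideanSpace ℝ (Fin d))) := by
    ext p; simp [hSdef, hIdef, Set.mem_prod]
  have huS : UniqueDiffOn ℝ S := by
    rw [hprod]; exact huI.prod uniqueDiffOn_univ
  have hInhdsIci : ∀ s t : ℝ, s ∈ I → t ∈ I → s < t → I ∈ 𝓝[Ici s] s := by
    intro s t hs ht hst
    refine Filter.mem_of_superset (Icc_mem_nhdsGE_of_mem ⟨le_rfl, hst⟩) ?_
    intro u hu
    exact ⟨hs.1.trans hu.1, lt_of_le_of_lt (ENNReal.ofReal_le_ofReal hu.2) ht.2⟩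
  have hInhdsIoi : ∀ s t : ℝ, s ∈ I → t ∈ I → s < t → I ∈ 𝓝[Ioi s] s := by
    intro s t hs ht hst
    exact nhdsWithin_mono _ Ioi_subset_Ici_self (hInhdsIci s t hs ht hst)
  -- continuity of the three pair maps
  have hΦc : ContinuousOn (fun p : ℝ × EuclideanSpace ℝ (Fin d) => Φ p.1 p.2) S :=
    hΦreg.continuousOn
  have hvc : ContinuousOn (fun p : ℝ × EuclideanSpace ℝ (Fin d) => v p.1 p.2) S :=
    hv.continuousOn
  have hφc : ContinuousOn (fun p : ℝ × EuclideanSpace ℝ (Fin d) => φ p.1 p.2) S :=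
    hφ.continuousOn
  -- continuity of x ↦ Φ s x in time along I, for fixed x
  have hΦtc : ∀ x, ContinuousOn (fun s : ℝ => Φ s x) I := by
    intro x
    have : ContinuousOn ((fun p : ℝ × EuclideanSpace ℝ (Fin d) => Φ p.1 p.2) ∘
        (fun s : ℝ => (s, x))) I :=
      hΦc.comp ((continuous_id.prodMk continuous_const).continuousOn)
        (fun s hs => hmemS s x hs)
    exact this
  -- slice differentiability
  have hΦslice : ∀ s ∈ I, ∀ x, HasFDerivAt (Φ s)
      ((fderivWithin ℝ (fun p : ℝ × EuclideanSpace ℝ (Fin d) => Φ p.1 p.2) S (s, x)).comp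
        ((0 : EuclideanSpace ℝ (Fin d) →L[ℝ] ℝ).prod
          (ContinuousLinearMap.id ℝ (EuclideanSpace ℝ (Fin d))))) x := by
    intro s hs x
    exact slice_hasFDerivAt ((hΦreg.differentiableOn one_ne_zero) (s, x) (hmemS s x hs))
      (fun y => hmemS s y hs)
  have hvslice : ∀ s ∈ I, ∀ x, HasFDerivAt (v s)
      ((fderivWithin ℝ (fun p : ℝ × EuclideanSpace ℝ (Fin d) => v p.1 p.2) S (s, x)).comp
        ((0 : EuclideanSpace ℝ (Fin d) →L[ℝ] ℝ).prod
          (ContinuousLinearMap.id ℝ (EuclideanSpace ℝ (Fin d))))) x := by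
    intro s hs x
    exact slice_hasFDerivAt ((hv.differentiableOn one_ne_zero) (s, x) (hmemS s x hs))
      (fun y => hmemS s y hs)
  have hφslice : ∀ s ∈ I, ∀ x, HasFDerivAt (φ s)
      ((fderivWithin ℝ (fun p : ℝ × EuclideanSpace ℝ (Fin d) => φ p.1 p.2) S (s, x)).comp
        ((0 : EuclideanSpace ℝ (Fin d) →L[ℝ] ℝ).prod
          (ContinuousLinearMap.id ℝ (EuclideanSpace ℝ (Fin d))))) x := by
    intro s hs x
    exact slice_hasFDerivAt ((hφ.differentiableOn one_ne_zero) (s, x) (hmemS s x hs))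
      (fun y => hmemS s y hs)
  -- continuity of the fderivWithin of the pair maps
  have hΦF : ContinuousOn
      (fderivWithin ℝ (fun p : ℝ × EuclideanSpace ℝ (Fin d) => Φ p.1 p.2) S) S :=
    hΦreg.continuousOn_fderivWithin huS le_rfl
  have hvF : ContinuousOn
      (fderivWithin ℝ (fun p : ℝ × EuclideanSpace ℝ (Fin d) => v p.1 p.2) S) S :=
    hv.continuousOn_fderivWithin huS le_rfl
  -- Step 1: φ is transported by the flow
  have hkey1 : ∀ t ∈ I, ∀ x, φ t (Φ t x) = φ 0 x := by
    intro t ht x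
    have hg : ∀ s ∈ I, HasDerivWithinAt (fun u => φ u (Φ u x)) 0 I s := by
      intro s hs
      set y := Φ s x with hy
      set Fφ := fderivWithin ℝ (fun p : ℝ × EuclideanSpace ℝ (Fin d) => φ p.1 p.2) S (s, y)
        with hFφ
      have hP : HasDerivWithinAt (fun u : ℝ => ((u, Φ u x) : ℝ × EuclideanSpace ℝ (Fin d)))
          (((1:ℝ), v s y)) I s :=
        HasDerivWithinAt.prodMk (hasDerivWithinAt_id s I) (hΦode s x hs.1 hs.2)
      have hFφw : HasFDerivWithinAt (fun p : ℝ × EuclideanSpace ℝ (Fin d) => φ p.1 p.2)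
          Fφ S (s, y) :=
        ((hφ.differentiableOn one_ne_zero) (s, y) (hmemS s y hs)).hasFDerivWithinAt
      have hcomp : HasDerivWithinAt (fun u => φ u (Φ u x)) (Fφ ((1:ℝ), v s y)) I s := by
        have := hFφw.comp_hasDerivWithinAt s hP (fun u hu => hmemS u (Φ u x) hu)
        exact this
      have htime : HasDerivWithinAt (fun u => φ u y)
          (Fφ ((1:ℝ), (0 : EuclideanSpace ℝ (Fin d)))) I s := by
        have hQ : HasDerivWithinAt (fun u : ℝ => ((u, y) : ℝ × EuclideanSpace ℝ (Fin d)))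
            (((1:ℝ), (0 : EuclideanSpace ℝ (Fin d)))) I s :=
          HasDerivWithinAt.prodMk (hasDerivWithinAt_id s I) (hasDerivWithinAt_const s I y)
        have := hFφw.comp_hasDerivWithinAt s hQ (fun u hu => hmemS u y hu)
        exact this
      have huniq : Fφ ((1:ℝ), (0:EuclideanSpace ℝ (Fin d)))
          = -(inner ℝ (v s y) (gradient (φ s) y) : ℝ) := by
        rw [← htime.derivWithin (huI s hs), (hpde s y hs.1 hs.2).derivWithin (huI s hs)]
      have hgrad : (inner ℝ (gradient (φ s) y) (v s y) : ℝ) = Fφ ((0:ℝ), v s y) := by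
        have hsp := hφslice s hs y
        have hfd : fderiv ℝ (φ s) y = Fφ.comp
            ((0 : EuclideanSpace ℝ (Fin d) →L[ℝ] ℝ).prod
              (ContinuousLinearMap.id ℝ (EuclideanSpace ℝ (Fin d)))) := hsp.fderiv
        rw [gradient, hfd, InnerProductSpace.toDual_symm_apply]
        rfl
      have hzero : Fφ ((1:ℝ), v s y) = 0 := by
        have hsplit : (((1:ℝ), v s y) : ℝ × EuclideanSpace ℝ (Fin d))
            = ((1:ℝ), (0:EuclideanSpace ℝ (Fin d))) + ((0:ℝ), v s y) := by
          simp
        rw [hsplit, map_add, huniq, ← hgrad, real_inner_comm]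
        ring
      rw [← hzero]
      exact hcomp
    have hcont : ContinuousOn (fun u => φ u (Φ u x)) (Icc 0 t) :=
      ContinuousOn.mono (fun s hs => (hg s hs).continuousWithinAt) (hIcc t ht)
    have hder : ∀ s ∈ Ico (0:ℝ) t, HasDerivWithinAt (fun u => φ u (Φ u x)) 0 (Ici s) s := by
      intro s hs
      have hsI : s ∈ I := hIcc t ht ⟨hs.1, le_of_lt hs.2⟩
      exact (hg s hsI).mono_of_mem_nhdsWithin (hInhdsIci s t hsI ht hs.2)
    have := constant_of_has_deriv_right_zero hcont hder t (right_mem_Icc.mpr ht.1)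
    rwa [hΦ0 x] at this
  -- Step 2: the flow is volume preserving
  have hdet : ∀ t ∈ I, ∀ x₀ : EuclideanSpace ℝ (Fin d),
      (fderiv ℝ (Φ t) x₀).det = 1 := by
    intro t ht x₀
    set b : Module.Basis (Fin d) ℝ (EuclideanSpace ℝ (Fin d)) :=
      (EuclideanSpace.basisFun (Fin d) ℝ).toBasis with hb
    set 𝒜 : ℝ → (EuclideanSpace ℝ (Fin d) →L[ℝ] EuclideanSpace ℝ (Fin d)) :=
      fun s => fderiv ℝ (Φ s) x₀ with h𝒜def
    set Dv : ℝ → (EuclideanSpace ℝ (Fin d) →L[ℝ] EuclideanSpace ℝ (Fin d)) :=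
      fun s => fderiv ℝ (v s) (Φ s x₀) with hDvdef
    set B : ℝ → (EuclideanSpace ℝ (Fin d) →L[ℝ] EuclideanSpace ℝ (Fin d)) :=
      fun s => (Dv s).comp (𝒜 s) with hBdef
    have h𝒜 : ∀ s ∈ I, HasFDerivAt (Φ s) (𝒜 s) x₀ :=
      fun s hs => ((hΦslice s hs x₀).differentiableAt).hasFDerivAt
    have hDv : ∀ s ∈ I, HasFDerivAt (v s) (Dv s) (Φ s x₀) :=
      fun s hs => ((hvslice s hs (Φ s x₀)).differentiableAt).hasFDerivAt
    have h𝒜cont : ContinuousOn 𝒜 I := by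
      have h1 : ContinuousOn (fun s : ℝ =>
          fderivWithin ℝ (fun p : ℝ × EuclideanSpace ℝ (Fin d) => Φ p.1 p.2) S (s, x₀)) I :=
        hΦF.comp ((continuous_id.prodMk continuous_const).continuousOn)
          (fun s hs => hmemS s x₀ hs)
      have h2 := h1.clm_comp (continuousOn_const (c :=
        ((0 : EuclideanSpace ℝ (Fin d) →L[ℝ] ℝ).prod
          (ContinuousLinearMap.id ℝ (EuclideanSpace ℝ (Fin d))))))
      exact h2.congr (fun s hs => (hΦslice s hs x₀).fderiv)
    have hDvcont : ContinuousOn Dv I := by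
      have hcurve : ContinuousOn (fun s : ℝ => ((s, Φ s x₀) : ℝ × EuclideanSpace ℝ (Fin d))) I :=
        continuousOn_id.prodMk (hΦtc x₀)
      have h1 : ContinuousOn (fun s : ℝ =>
          fderivWithin ℝ (fun p : ℝ × EuclideanSpace ℝ (Fin d) => v p.1 p.2) S (s, Φ s x₀)) I :=
        hvF.comp hcurve (fun s hs => hmemS s (Φ s x₀) hs)
      have h2 := h1.clm_comp (continuousOn_const (c :=
        ((0 : EuclideanSpace ℝ (Fin d) →L[ℝ] ℝ).prod
          (ContinuousLinearMap.id ℝ (EuclideanSpace ℝ (Fin d))))))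
      exact h2.congr (fun s hs => (hvslice s hs (Φ s x₀)).fderiv)
    have hBcont : ContinuousOn B I := hDvcont.clm_comp h𝒜cont
    -- continuity of u ↦ v u (Φ u x) on I, for each fixed x
    have hvΦc : ∀ x, ContinuousOn (fun u : ℝ => v u (Φ u x)) I := by
      intro x
      have : ContinuousOn ((fun p : ℝ × EuclideanSpace ℝ (Fin d) => v p.1 p.2) ∘
          (fun u : ℝ => (u, Φ u x))) I :=
        hvc.comp (continuousOn_id.prodMk (hΦtc x)) (fun u hu => hmemS u (Φ u x) hu)
      exact this
    -- integral representation of the flow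
    have hFTC : ∀ s ∈ I, ∀ x, Φ s x = x + ∫ u in (0:ℝ)..s, v u (Φ u x) := by
      intro s hs x
      have hs0 : (0:ℝ) ≤ s := hs.1
      have hIccI : Icc (0:ℝ) s ⊆ I := hIcc s hs
      have hcont : ContinuousOn (fun u : ℝ => Φ u x) (Icc 0 s) := (hΦtc x).mono hIccI
      have hder : ∀ u ∈ Ioo (0:ℝ) s, HasDerivWithinAt (fun r => Φ r x) (v u (Φ u x)) (Ioi u) u := by
        intro u hu
        have huI : u ∈ I := hIccI (Ioo_subset_Icc_self hu)
        have hnhds : I ∈ 𝓝 u := by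
          refine Filter.mem_of_superset (Ioo_mem_nhds hu.1 hu.2) ?_
          intro r hr
          exact hIccI (Ioo_subset_Icc_self hr)
        exact (((hΦode u x huI.1 huI.2).hasDerivAt hnhds).hasDerivWithinAt)
      have hint : IntervalIntegrable (fun u : ℝ => v u (Φ u x)) volume 0 s := by
        apply ContinuousOn.intervalIntegrable
        rw [Set.uIcc_of_le hs0]
        exact (hvΦc x).mono hIccI
      have := intervalIntegral.integral_eq_sub_of_hasDeriv_right_of_le hs0 hcont hder hint
      rw [hΦ0 x] at this
      rw [this]
      abel
    -- the bounding function for differentiation under the integral sign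
    set G : ℝ × EuclideanSpace ℝ (Fin d) →
        (EuclideanSpace ℝ (Fin d) →L[ℝ] EuclideanSpace ℝ (Fin d)) := fun p =>
      ((fderivWithin ℝ (fun q : ℝ × EuclideanSpace ℝ (Fin d) => v q.1 q.2) S
          (p.1, Φ p.1 p.2)).comp
        ((0 : EuclideanSpace ℝ (Fin d) →L[ℝ] ℝ).prod
          (ContinuousLinearMap.id ℝ (EuclideanSpace ℝ (Fin d))))).comp
      ((fderivWithin ℝ (fun q : ℝ × EuclideanSpace ℝ (Fin d) => Φ q.1 q.2) S p).comp
        ((0 : EuclideanSpace ℝ (Fin d) →L[ℝ] ℝ).prod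
          (ContinuousLinearMap.id ℝ (EuclideanSpace ℝ (Fin d))))) with hGdef
    have hGcont : ContinuousOn G S := by
      have hcurve : ContinuousOn (fun p : ℝ × EuclideanSpace ℝ (Fin d) =>
          ((p.1, Φ p.1 p.2) : ℝ × EuclideanSpace ℝ (Fin d))) S :=
        continuousOn_fst.prodMk hΦc
      have h1 : ContinuousOn (fun p : ℝ × EuclideanSpace ℝ (Fin d) =>
          fderivWithin ℝ (fun q : ℝ × EuclideanSpace ℝ (Fin d) => v q.1 q.2) S
            (p.1, Φ p.1 p.2)) S :=
        hvF.comp hcurve (fun p hp => hmemS p.1 (Φ p.1 p.2) hp)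
      exact (h1.clm_comp continuousOn_const).clm_comp (hΦF.clm_comp continuousOn_const)
    have hGeq : ∀ (u : ℝ) (x : EuclideanSpace ℝ (Fin d)), u ∈ I →
        (fderiv ℝ (v u) (Φ u x)).comp (fderiv ℝ (Φ u) x) = G (u, x) := by
      intro u x huI
      rw [hGdef]
      dsimp only
      rw [(hvslice u huI (Φ u x)).fderiv, (hΦslice u huI x).fderiv]
    -- integral equation for the spatial derivative
    have h𝒜int : ∀ s ∈ I, 𝒜 s
        = ContinuousLinearMap.id ℝ (EuclideanSpace ℝ (Fin d)) + ∫ u in (0:ℝ)..s, B u := by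
      intro s hs
      have hs0 : (0:ℝ) ≤ s := hs.1
      have hIccI : Icc (0:ℝ) s ⊆ I := hIcc s hs
      have hIocI : Ioc (0:ℝ) s ⊆ I := fun u hu => hIccI (Ioc_subset_Icc_self hu)
      obtain ⟨C, hC⟩ := (isCompact_Icc.prod (isCompact_closedBall x₀ 1)).exists_bound_of_continuousOn
        (hGcont.mono (by
          rintro ⟨u, x⟩ ⟨hu, _⟩
          exact hmemS u x (hIccI hu)))
      have hdom := intervalIntegral.hasFDerivAt_integral_of_dominated_of_fderiv_le
        (𝕜 := ℝ) (μ := volume) (a := 0) (b := s)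
        (F := fun (x : EuclideanSpace ℝ (Fin d)) (u : ℝ) => v u (Φ u x))
        (F' := fun (x : EuclideanSpace ℝ (Fin d)) (u : ℝ) =>
          (fderiv ℝ (v u) (Φ u x)).comp (fderiv ℝ (Φ u) x))
        (x₀ := x₀) (bound := fun _ => C) (s := Metric.ball x₀ 1) (Metric.ball_mem_nhds x₀ one_pos)
        (Filter.Eventually.of_forall (fun x => by
          rw [Set.uIoc_of_le hs0]
          exact (((hvΦc x).mono hIocI).aestronglyMeasurable measurableSet_Ioc)))
        (by
          apply ContinuousOn.intervalIntegrable
          rw [Set.uIcc_of_le hs0]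
          exact (hvΦc x₀).mono hIccI)
        (by
          rw [Set.uIoc_of_le hs0]
          exact ((hBcont.mono hIocI).aestronglyMeasurable measurableSet_Ioc))
        (Filter.Eventually.of_forall (fun u hu x hx => by
          rw [Set.uIoc_of_le hs0] at hu
          have huI : u ∈ I := hIocI hu
          show ‖(fderiv ℝ (v u) (Φ u x)).comp (fderiv ℝ (Φ u) x)‖ ≤ C
          rw [hGeq u x huI]
          exact hC (u, x) ⟨Ioc_subset_Icc_self hu, Metric.ball_subset_closedBall hx⟩))
        intervalIntegrable_const
        (Filter.Eventually.of_forall (fun u hu x hx => by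
          rw [Set.uIoc_of_le hs0] at hu
          have huI : u ∈ I := hIocI hu
          exact HasFDerivAt.comp x
            ((hvslice u huI (Φ u x)).differentiableAt.hasFDerivAt)
            ((hΦslice u huI x).differentiableAt.hasFDerivAt)))
      have hplus : HasFDerivAt
          (fun x : EuclideanSpace ℝ (Fin d) => x + ∫ u in (0:ℝ)..s, v u (Φ u x))
          (ContinuousLinearMap.id ℝ (EuclideanSpace ℝ (Fin d))
            + ∫ u in (0:ℝ)..s, B u) x₀ :=
        (hasFDerivAt_id x₀).add hdom
      have hfun : (Φ s) = (fun x => x + ∫ u in (0:ℝ)..s, v u (Φ u x)) :=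
        funext (hFTC s hs)
      rw [← hfun] at hplus
      exact (h𝒜 s hs).unique hplus
    -- ODE for the spatial derivative
    have h𝒜deriv : ∀ s ∈ Ico (0:ℝ) t, HasDerivWithinAt 𝒜 (B s) (Ici s) s := by
      intro s hs
      have hsI : s ∈ I := hIcc t ht ⟨hs.1, le_of_lt hs.2⟩
      have hint : IntervalIntegrable B volume 0 s := by
        apply ContinuousOn.intervalIntegrable
        rw [Set.uIcc_of_le hs.1]
        exact hBcont.mono (hIcc s hsI)
      have hmeasat : StronglyMeasurableAtFilter B (𝓝[Ioi s] s) volume := by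
        refine ⟨Ioc s t, Ioc_mem_nhdsGT_of_mem ⟨le_rfl, hs.2⟩, ?_⟩
        refine (hBcont.mono ?_).aestronglyMeasurable measurableSet_Ioc
        intro u hu
        exact hIcc t ht ⟨hs.1.trans (le_of_lt hu.1), hu.2⟩
      have hcw : ContinuousWithinAt B (Ioi s) s :=
        (hBcont s hsI).mono_of_mem_nhdsWithin (hInhdsIoi s t hsI ht hs.2)
      have hFTCd : HasDerivWithinAt (fun r => ∫ u in (0:ℝ)..r, B u) (B s) (Ici s) s :=
        intervalIntegral.integral_hasDerivWithinAt_right hint hmeasat hcw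
      have hG' : HasDerivWithinAt (fun r =>
          ContinuousLinearMap.id ℝ (EuclideanSpace ℝ (Fin d)) + ∫ u in (0:ℝ)..r, B u)
          (B s) (Ici s) s := by
        have := (hasDerivWithinAt_const s (Ici s)
          (ContinuousLinearMap.id ℝ (EuclideanSpace ℝ (Fin d)))).add hFTCd
        simpa using hFTCd
      refine hG'.congr_of_eventuallyEq ?_ (h𝒜int s hsI)
      exact Filter.eventuallyEq_of_mem (hInhdsIci s t hsI ht hs.2) (fun u hu => h𝒜int u hu)
    -- pass to matrices
    have hof : ∀ L : EuclideanSpace ℝ (Fin d) →L[ℝ] EuclideanSpace ℝ (Fin d),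
        (Matrix.of (fun i j => L (b j) i) : Matrix (Fin d) (Fin d) ℝ)
          = LinearMap.toMatrix b b ↑L := by
      intro L
      ext i j
      rw [LinearMap.toMatrix_apply]
      simp [hb, OrthonormalBasis.coe_toBasis_repr_apply, EuclideanSpace.basisFun_repr]
    have hdetcont : ContinuousOn
        (fun u => Matrix.det (Matrix.of (fun i j => 𝒜 u (b j) i))) (Icc 0 t) := by
      have h𝒜cc : ContinuousOn 𝒜 (Icc 0 t) := h𝒜cont.mono (hIcc t ht)
      have hMc : ContinuousOn (fun u => (fun i j => 𝒜 u (b j) i : Fin d → Fin d → ℝ))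
          (Icc 0 t) := by
        rw [continuousOn_pi]
        intro i
        rw [continuousOn_pi]
        intro j
        exact (EuclideanSpace.proj (𝕜 := ℝ) i).continuous.comp_continuousOn
          (h𝒜cc.clm_apply continuousOn_const)
      exact (detCMM d).cont.comp_continuousOn hMc
    have hdetder : ∀ s ∈ Ico (0:ℝ) t, HasDerivWithinAt
        (fun u => Matrix.det (Matrix.of (fun i j => 𝒜 u (b j) i))) 0 (Ici s) s := by
      intro s hs
      have hsI : s ∈ I := hIcc t ht ⟨hs.1, le_of_lt hs.2⟩
      set N : Matrix (Fin d) (Fin d) ℝ := Matrix.of (fun i j => Dv s (b j) i) with hNdef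
      have hNM : N * Matrix.of (fun i j => 𝒜 s (b j) i)
          = Matrix.of (fun i j => B s (b j) i) := by
        rw [hNdef, hof (Dv s), hof (𝒜 s), hof (B s), hBdef]
        dsimp only
        rw [ContinuousLinearMap.toLinearMap_comp, LinearMap.toMatrix_comp b b b]
      apply hasDerivWithinAt_det_comp (N := N)
      · have hcompo : ∀ (i j : Fin d), HasDerivWithinAt (fun u => 𝒜 u (b j) i)
            ((B s (b j)) i) (Ici s) s := by
          intro i j
          have h1 : HasDerivWithinAt (fun u => 𝒜 u (b j)) (B s (b j)) (Ici s) s := by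
            have := (h𝒜deriv s hs).clm_apply (hasDerivWithinAt_const s (Ici s) (b j))
            simpa using this
          exact (EuclideanSpace.proj (𝕜 := ℝ) i).hasFDerivAt.comp_hasDerivWithinAt s h1
        apply hasDerivWithinAt_pi'
        intro i
        apply hasDerivWithinAt_pi'
        intro j
        have : (N * Matrix.of (fun i j => 𝒜 s (b j) i)) i j = B s (b j) i := by
          rw [hNM]; rfl
        rw [this]
        exact hcompo i j
      · have : Matrix.trace N = LinearMap.trace ℝ (EuclideanSpace ℝ (Fin d)) ↑(Dv s) := by
          rw [hNdef, hof (Dv s), LinearMap.trace_eq_matrix_trace ℝ b]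
        rw [this]
        exact hdiv s (Φ s x₀) hsI.1 hsI.2
    have hconstdet := constant_of_has_deriv_right_zero hdetcont hdetder t (right_mem_Icc.mpr ht.1)
    have h𝒜0 : 𝒜 0 = ContinuousLinearMap.id ℝ (EuclideanSpace ℝ (Fin d)) := by
      have hΦid : Φ 0 = id := funext hΦ0
      rw [h𝒜def]
      dsimp only
      rw [hΦid]
      exact fderiv_id
    have hdet0 : Matrix.det (Matrix.of (fun i j => 𝒜 0 (b j) i)) = 1 := by
      rw [hof (𝒜 0), h𝒜0, ContinuousLinearMap.coe_id, LinearMap.toMatrix_id, Matrix.det_one]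
    have hdett : Matrix.det (Matrix.of (fun i j => 𝒜 t (b j) i)) = 1 := by
      rw [hconstdet, hdet0]
    rw [show (fderiv ℝ (Φ t) x₀) = 𝒜 t from rfl]
    show LinearMap.det (↑(𝒜 t) : EuclideanSpace ℝ (Fin d) →ₗ[ℝ] EuclideanSpace ℝ (Fin d)) = 1
    rw [← LinearMap.det_toMatrix b, ← hof (𝒜 t)]
    exact hdett
  -- Step 3: conclusion
  intro t ht0 htT η hη
  have ht : t ∈ I := ⟨ht0, htT⟩
  have hφ0c : Continuous (φ 0) := by
    have : Continuous ((fun p : ℝ × EuclideanSpace ℝ (Fin d) => φ p.1 p.2) ∘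
        (fun x : EuclideanSpace ℝ (Fin d) => ((0:ℝ), x))) :=
      hφc.comp_continuous (continuous_const.prodMk continuous_id)
        (fun x => hmemS 0 x hI0)
    exact this
  have hvol : ∀ A : Set (EuclideanSpace ℝ (Fin d)), MeasurableSet A →
      volume (Φ t '' A) = volume A := by
    intro A hA
    have hfd : ∀ x ∈ A, HasFDerivWithinAt (Φ t) (fderiv ℝ (Φ t) x) A x := by
      intro x _
      exact ((hΦslice t ht x).differentiableAt.hasFDerivAt).hasFDerivWithinAt
    have hinj : InjOn (Φ t) A := ((hΦbij t ht0 htT).injective).injOn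
    rw [← lintegral_abs_det_fderiv_eq_addHaar_image volume hA hfd hinj]
    have : ∀ x ∈ A, ENNReal.ofReal |(fderiv ℝ (Φ t) x).det| = 1 := by
      intro x _
      rw [hdet t ht x]
      simp
    rw [setLIntegral_congr_fun hA this]
    simp
  constructor
  · have hset : {x | η ≤ φ t x} = Φ t '' {x | η ≤ φ 0 x} := by
      ext y
      constructor
      · intro hy
        obtain ⟨x, rfl⟩ := (hΦbij t ht0 htT).surjective y
        exact ⟨x, by rwa [mem_setOf_eq, ← hkey1 t ht x], rfl⟩
      · rintro ⟨x, hx, rfl⟩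
        have := hkey1 t ht x
        simpa [mem_setOf_eq, this] using hx
    rw [hset]
    exact hvol _ ((isClosed_le continuous_const hφ0c).measurableSet)
  · have hset : {x | η ≤ -(φ t x)} = Φ t '' {x | η ≤ -(φ 0 x)} := by
      ext y
      constructor
      · intro hy
        obtain ⟨x, rfl⟩ := (hΦbij t ht0 htT).surjective y
        exact ⟨x, by rwa [mem_setOf_eq, ← hkey1 t ht x], rfl⟩
      · rintro ⟨x, hx, rfl⟩
        have := hkey1 t ht x
        simpa [mem_setOf_eq, this] using hx
    rw [hset]
    exact hvol _ ((isClosed_le continuous_const hφ0c.neg).measurableSet)
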